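/- There exists an infinite metric space X that is strongly plastic (every noncontractive map f : X → X is an isometric embedding) but not uniformly plastic: there is ε > 0 such that for every δ > 0 there is a bijection f : X → X with d(f(x), f(y)) > d(x, y) + ε for some x, y ∈ X, yet d(f(x̃), f(ỹ)) ≥ d(x̃, ỹ) − δ for all x̃, ỹ ∈ X. -/

import Mathlib

namespace PlasticEx

abbrev Sp : Type := (n : ℕ) × Fin (n + 3)

noncomputable def gam (n : ℕ) : ℝ := n / (16 * (n + 1))
noncomputable def tt (n : ℕ) : ℝ := 1 / (8 * (n + 1))

lemma gam_nonneg (n : ℕ) : 0 ≤ gam n := by unfold gam; positivity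
lemma gam_lt (n : ℕ) : gam n < 1 / 16 := by
  unfold gam
  rw [div_lt_iff₀ (by positivity)]
  push_cast; nlinarith [Nat.cast_nonneg (α := ℝ) n]
lemma tt_pos (n : ℕ) : 0 < tt n := by unfold tt; positivity
lemma gam_strictMono {n m : ℕ} (h : n < m) : gam n < gam m := by
  unfold gam
  rw [div_lt_div_iff₀ (by positivity) (by positivity)]
  have : (n : ℝ) < m := by exact_mod_cast h
  nlinarith [Nat.cast_nonneg (α := ℝ) n, Nat.cast_nonneg (α := ℝ) m]

noncomputable def D (x y : Sp) : ℝ :=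
  if x = y then 0
  else if x.1 = y.1 then 2 - gam x.1 - ((x.2.val : ℝ) + (y.2.val : ℝ) - 1) * tt x.1
  else 3 / 2

lemma sp_ext {x y : Sp} (h1 : x.1 = y.1) (h2 : x.2.val = y.2.val) : x = y := by
  obtain ⟨a, p⟩ := x; obtain ⟨b, q⟩ := y
  dsimp at h1; subst h1
  exact congrArg (Sigma.mk a) (Fin.ext h2)

lemma mk_eq_mk {n : ℕ} {i j : Fin (n + 3)} : (⟨n, i⟩ : Sp) = ⟨n, j⟩ ↔ i = j := by simp

lemma D_self (x : Sp) : D x x = 0 := by simp [D]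

lemma D_fst_ne {x y : Sp} (h : x.1 ≠ y.1) : D x y = 3 / 2 := by
  have hxy : x ≠ y := fun e => h (congrArg Sigma.fst e)
  simp [D, hxy, h]

lemma D_same {n : ℕ} {i j : Fin (n + 3)} (h : i ≠ j) :
    D ⟨n, i⟩ ⟨n, j⟩ = 2 - gam n - ((i.val : ℝ) + (j.val : ℝ) - 1) * tt n := by
  have : (⟨n, i⟩ : Sp) ≠ ⟨n, j⟩ := fun e => h (mk_eq_mk.mp e)
  simp [D, this]

lemma val_sum_bounds {n : ℕ} {i j : Fin (n + 3)} (h : i ≠ j) :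
    1 ≤ i.val + j.val ∧ i.val + j.val ≤ 2 * n + 3 := by
  constructor
  · rcases Nat.eq_zero_or_pos (i.val + j.val) with h0 | h1
    · exact absurd (Fin.ext (by omega : i.val = j.val)) h
    · exact h1
  · have hi := i.isLt; have hj := j.isLt
    rcases Nat.lt_or_ge (i.val + j.val) (2 * n + 4) with h1 | h1
    · omega
    · exact absurd (Fin.ext (by omega : i.val = j.val)) h

lemma D_same_lb {n : ℕ} {i j : Fin (n + 3)} (h : i ≠ j) :
    27 / 16 ≤ D ⟨n, i⟩ ⟨n, j⟩ := by
  rw [D_same h]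
  obtain ⟨h1, h2⟩ := val_sum_bounds h
  have h1' : (1 : ℝ) ≤ (i.val : ℝ) + (j.val : ℝ) := by exact_mod_cast h1
  have h2' : (i.val : ℝ) + (j.val : ℝ) ≤ 2 * n + 3 := by exact_mod_cast h2
  have hg := gam_lt n
  have ht : ((i.val : ℝ) + (j.val : ℝ) - 1) * tt n ≤ 1 / 4 := by
    unfold tt
    rw [mul_one_div, div_le_iff₀ (by positivity)]
    nlinarith [Nat.cast_nonneg (α := ℝ) n]
  linarith

lemma D_same_ub {x y : Sp} (h : x.1 = y.1) : D x y ≤ 2 - gam x.1 := by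
  obtain ⟨a, p⟩ := x; obtain ⟨b, q⟩ := y
  dsimp at h; subst h
  by_cases hpq : p = q
  · subst hpq; rw [D_self]; have := gam_lt a; linarith
  · rw [D_same hpq]
    have h1 : 1 ≤ p.val + q.val := (val_sum_bounds hpq).1
    have h1' : (1 : ℝ) ≤ (p.val : ℝ) + (q.val : ℝ) := by exact_mod_cast h1
    have ht := tt_pos a
    nlinarith

lemma D_lb {x y : Sp} (h : x ≠ y) : 3 / 2 ≤ D x y := by
  by_cases hf : x.1 = y.1
  · obtain ⟨a, p⟩ := x; obtain ⟨b, q⟩ := y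
    dsimp at hf; subst hf
    have hpq : p ≠ q := fun e => h (by rw [e])
    linarith [D_same_lb hpq]
  · rw [D_fst_ne hf]

lemma D_ub (x y : Sp) : D x y ≤ 2 := by
  by_cases hf : x.1 = y.1
  · have := D_same_ub hf; have := gam_nonneg x.1; linarith
  · rw [D_fst_ne hf]; norm_num

lemma D_nonneg (x y : Sp) : 0 ≤ D x y := by
  by_cases hxy : x = y
  · subst hxy; rw [D_self]
  · linarith [D_lb hxy]

lemma D_comm (x y : Sp) : D x y = D y x := by
  by_cases hxy : x = y
  · subst hxy; rfl
  · by_cases hf : x.1 = y.1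
    · obtain ⟨a, p⟩ := x; obtain ⟨b, q⟩ := y
      dsimp at hf; subst hf
      have hpq : p ≠ q := fun e => hxy (by rw [e])
      rw [D_same hpq, D_same (Ne.symm hpq)]; ring
    · rw [D_fst_ne hf, D_fst_ne (Ne.symm hf)]

lemma D_triangle (x y z : Sp) : D x z ≤ D x y + D y z := by
  by_cases hxz : x = z
  · subst hxz; rw [D_self]
    exact add_nonneg (D_nonneg x y) (D_nonneg y x)
  · by_cases hxy : x = y
    · subst hxy; rw [D_self]; linarith [le_refl (D x z)]
    · by_cases hyz : y = z
      · subst hyz; rw [D_self]; linarith [le_refl (D x y)]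
      · have := D_ub x z
        have := D_lb hxy
        have := D_lb hyz
        linarith

noncomputable instance spMetric : MetricSpace Sp where
  dist := D
  dist_self := D_self
  dist_comm := D_comm
  dist_triangle := D_triangle
  eq_of_dist_eq_zero := by
    intro x y h
    by_contra hxy
    change D x y = 0 at h
    have h2 := D_lb hxy
    rw [h] at h2
    norm_num at h2

lemma dist_eq (x y : Sp) : dist x y = D x y := rfl

theorem plastic (f : Sp → Sp) (h : ∀ x y : Sp, dist x y ≤ dist (f x) (f y)) :
    ∀ x y : Sp, dist (f x) (f y) = dist x y := by
  have hD : ∀ x y : Sp, D x y ≤ D (f x) (f y) := h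
  -- f is injective
  have hinj : ∀ x y : Sp, x ≠ y → f x ≠ f y := by
    intro x y hxy he
    have h1 := hD x y
    rw [he, D_self] at h1
    linarith [D_lb hxy]
  -- f preserves the "same piece" relation
  have hsame : ∀ (n : ℕ) (i j : Fin (n + 3)), (f ⟨n, i⟩).1 = (f ⟨n, j⟩).1 := by
    intro n i j
    by_cases hij : i = j
    · rw [hij]
    · by_contra hne
      have h1 := hD ⟨n, i⟩ ⟨n, j⟩
      rw [D_fst_ne hne] at h1
      linarith [D_same_lb hij]
  -- each piece maps into its own piece
  have hk : ∀ (n : ℕ) (i : Fin (n + 3)), (f ⟨n, i⟩).1 = n := by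
    intro n i
    set k := (f ⟨n, (0 : Fin (n + 3))⟩).1 with hkdef
    have hall : ∀ j : Fin (n + 3), (f ⟨n, j⟩).1 = k := fun j => hsame n j 0
    -- n ≤ k by cardinality
    have hcast : ∀ j : Fin (n + 3), (f ⟨n, j⟩).1 + 3 = k + 3 := fun j => by rw [hall j]
    have hnk : n ≤ k := by
      have hφ : Function.Injective (fun j : Fin (n + 3) => Fin.cast (hcast j) (f ⟨n, j⟩).2) := by
        intro a b he
        have hval : (f ⟨n, a⟩).2.val = (f ⟨n, b⟩).2.val := by
          have := congrArg Fin.val he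
          simpa using this
        have hfe : f ⟨n, a⟩ = f ⟨n, b⟩ := sp_ext (by rw [hall a, hall b]) hval
        by_contra hab
        exact hinj _ _ (fun e => hab (mk_eq_mk.mp e)) hfe
      have := Fintype.card_le_of_injective _ hφ
      simpa using this
    -- k ≤ n by diameter
    have hkn : k ≤ n := by
      have h01 : (0 : Fin (n + 3)) ≠ 1 := by
        intro e
        have := congrArg Fin.val e
        simp [Fin.val_one] at this
      have h1 := hD ⟨n, 0⟩ ⟨n, 1⟩
      rw [D_same h01] at h1
      have h2 : D (f ⟨n, 0⟩) (f ⟨n, 1⟩) ≤ 2 - gam k := by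
        have := D_same_ub (x := f ⟨n, (0:Fin (n+3))⟩) (y := f ⟨n, (1:Fin (n+3))⟩)
          (by rw [hall 0, hall 1])
        rwa [hall 0] at this
      have hv : ((Fin.val (0 : Fin (n+3)) : ℝ) + (Fin.val (1 : Fin (n+3)) : ℝ) - 1) = 0 := by
        norm_num [Fin.val_one]
      rw [hv, zero_mul] at h1
      have hgk : gam k ≤ gam n := by linarith
      by_contra hlt
      exact absurd hgk (not_le.mpr (gam_strictMono (not_le.mp hlt)))
    have : k = n := le_antisymm hkn hnk
    rw [hall i, this]
  -- key: distances are preserved on each piece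
  have key : ∀ (n : ℕ) (i j : Fin (n + 3)), D (f ⟨n, i⟩) (f ⟨n, j⟩) = D ⟨n, i⟩ ⟨n, j⟩ := by
    intro n
    have hcast : ∀ j : Fin (n + 3), (f ⟨n, j⟩).1 + 3 = n + 3 := fun j => by rw [hk n j]
    set g : Fin (n + 3) → Fin (n + 3) := fun j => Fin.cast (hcast j) (f ⟨n, j⟩).2 with hgdef
    have hfg : ∀ j : Fin (n + 3), f ⟨n, j⟩ = ⟨n, g j⟩ := by
      intro j
      exact sp_ext (hk n j) (by simp [hgdef])
    have hginj : Function.Injective g := by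
      intro a b he
      have hval : (f ⟨n, a⟩).2.val = (f ⟨n, b⟩).2.val := by
        have := congrArg Fin.val he
        simpa [hgdef] using this
      have hfe : f ⟨n, a⟩ = f ⟨n, b⟩ := sp_ext (by rw [hk n a, hk n b]) hval
      by_contra hab
      exact hinj _ _ (fun e => hab (mk_eq_mk.mp e)) hfe
    have hgbij : Function.Bijective g := Finite.injective_iff_bijective.mp hginj
    set T : Fin (n + 3) × Fin (n + 3) → ℝ := fun p => D ⟨n, p.1⟩ ⟨n, p.2⟩ with hTdef
    have hle : ∀ p : Fin (n + 3) × Fin (n + 3), T p ≤ T (g p.1, g p.2) := by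
      intro p
      have := hD ⟨n, p.1⟩ ⟨n, p.2⟩
      rwa [hfg p.1, hfg p.2] at this
    have hsum : ∑ p : Fin (n + 3) × Fin (n + 3), T p
        = ∑ p : Fin (n + 3) × Fin (n + 3), T (g p.1, g p.2) := by
      exact ((hgbij.prodMap hgbij).sum_comp T).symm
    have heach := (Finset.sum_eq_sum_iff_of_le (fun p _ => hle p)).mp hsum
    intro i j
    rw [hfg i, hfg j]
    exact (heach (i, j) (Finset.mem_univ _)).symm
  -- conclude
  intro x y
  obtain ⟨n, i⟩ := x
  obtain ⟨m, j⟩ := y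
  by_cases hnm : n = m
  · subst hnm
    exact key n i j
  · have hfst : (f ⟨n, i⟩).1 ≠ (f ⟨m, j⟩).1 := by
      rw [hk n i, hk m j]; exact hnm
    show D (f ⟨n, i⟩) (f ⟨m, j⟩) = D ⟨n, i⟩ ⟨m, j⟩
    rw [D_fst_ne hfst, D_fst_ne (by exact hnm : (⟨n,i⟩ : Sp).1 ≠ (⟨m,j⟩ : Sp).1)]

def permN (N n : ℕ) : Equiv.Perm (Fin (n + 3)) :=
  if n = N then finRotate (n + 3) else Equiv.refl _

lemma permN_at (N : ℕ) : permN N N = finRotate (N + 3) := if_pos rfl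
lemma permN_ne {N n : ℕ} (h : n ≠ N) : permN N n = Equiv.refl _ := if_neg h

def Ff (N : ℕ) : Sp → Sp := fun x => ⟨x.1, permN N x.1 x.2⟩

lemma Ff_apply (N n : ℕ) (i : Fin (n + 3)) : Ff N ⟨n, i⟩ = ⟨n, permN N n i⟩ := rfl

lemma Ff_bij (N : ℕ) : Function.Bijective (Ff N) := by
  constructor
  · intro x y he
    have h1 := congrArg (fun z : Sp => z.1) he
    simp only [Ff] at h1
    obtain ⟨a, p⟩ := x; obtain ⟨b, q⟩ := y
    dsimp at h1; subst h1
    rw [Ff_apply, Ff_apply] at he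
    have h2 := mk_eq_mk.mp he
    rw [mk_eq_mk]
    exact (permN N a).injective h2
  · intro y
    refine ⟨⟨y.1, (permN N y.1).symm y.2⟩, ?_⟩
    obtain ⟨a, p⟩ := y
    rw [Ff_apply]
    simp

lemma two_tt_le (N : ℕ) : 2 * tt N ≤ 1 / ((N : ℝ) + 1) := by
  unfold tt
  rw [mul_one_div, div_le_div_iff₀ (by positivity) (by positivity)]
  nlinarith [Nat.cast_nonneg (α := ℝ) N]

theorem nonuniform : ∃ ε : ℝ, 0 < ε ∧ ∀ δ : ℝ, 0 < δ →
    ∃ f : Sp → Sp, Function.Bijective f ∧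
      (∃ x y : Sp, dist (f x) (f y) > dist x y + ε) ∧
      (∀ x y : Sp, dist (f x) (f y) ≥ dist x y - δ) := by
  refine ⟨1 / 16, by norm_num, ?_⟩
  intro δ hδ
  obtain ⟨N, hN⟩ := exists_nat_one_div_lt hδ
  have h2tt : 2 * tt N < δ := lt_of_le_of_lt (two_tt_le N) (by exact_mod_cast hN)
  have httpos := tt_pos N
  refine ⟨Ff N, Ff_bij N, ?_, ?_⟩
  · -- expansion
    refine ⟨⟨N, Fin.last (N + 2)⟩, ⟨N, 0⟩, ?_⟩
    have hlast0 : Fin.last (N + 2) ≠ (0 : Fin (N + 3)) := by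
      intro e
      have := congrArg Fin.val e
      simp [Fin.val_last] at this
    have h01 : (0 : Fin (N + 3)) ≠ 1 := by
      intro e
      have := congrArg Fin.val e
      simp [Fin.val_one] at this
    have e1 : Ff N ⟨N, Fin.last (N + 2)⟩ = ⟨N, (0 : Fin (N + 3))⟩ := by
      rw [Ff_apply, permN_at]
      rw [show (finRotate (N + 2 + 1)) (Fin.last (N + 2)) = Fin.last (N + 2) + 1 from
        finRotate_succ_apply _]
      rw [Fin.last_add_one]
    have e2 : Ff N ⟨N, (0 : Fin (N + 3))⟩ = ⟨N, (1 : Fin (N + 3))⟩ := by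
      rw [Ff_apply, permN_at]
      rw [show (finRotate (N + 2 + 1)) (0 : Fin (N + 3)) = 0 + 1 from finRotate_succ_apply _]
      rw [zero_add]
    show dist (Ff N ⟨N, Fin.last (N + 2)⟩) (Ff N ⟨N, (0 : Fin (N+3))⟩) > _
    rw [e1, e2, dist_eq, dist_eq, D_same h01, D_same hlast0]
    have hv1 : ((Fin.val (0 : Fin (N+3)) : ℝ) + (Fin.val (1 : Fin (N+3)) : ℝ) - 1) = 0 := by
      norm_num [Fin.val_one]
    have hv2 : ((Fin.val (Fin.last (N+2)) : ℝ) + (Fin.val (0 : Fin (N+3)) : ℝ) - 1) * tt N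
        = 1 / 8 := by
      rw [Fin.val_last]
      unfold tt
      push_cast
      field_simp
      simp
      ring
    rw [hv1, zero_mul, hv2]
    linarith
  · -- near-isometry
    intro x y
    obtain ⟨n, i⟩ := x
    obtain ⟨m, j⟩ := y
    by_cases hnm : n = m
    · subst hnm
      by_cases hnN : n = N
      · subst hnN
        by_cases hij : i = j
        · subst hij
          rw [dist_eq, dist_eq, D_self, D_self]
          linarith
        · have hij1 : permN n n i ≠ permN n n j := fun e => hij ((permN n n).injective e)
          rw [Ff_apply, Ff_apply, dist_eq, dist_eq, D_same hij1, D_same hij]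
          rw [permN_at] at hij1 ⊢
          rw [show (finRotate (n + 2 + 1)) i = i + 1 from finRotate_succ_apply _,
            show (finRotate (n + 2 + 1)) j = j + 1 from finRotate_succ_apply _] at hij1 ⊢
          have hvi := Fin.val_add_one i
          have hvj := Fin.val_add_one j
          have hlast : ¬(i = Fin.last (n + 2) ∧ j = Fin.last (n + 2)) := by
            rintro ⟨e1, e2⟩; exact hij (e1.trans e2.symm)
          have hib := i.isLt
          have hjb := j.isLt
          split_ifs at hvi hvj with c1 c2 c2
          · exact absurd ⟨c1, c2⟩ hlast
          · -- i = last, j not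
            rw [hvi, hvj, c1]
            rw [Fin.val_last]
            push_cast
            nlinarith
          · -- j = last, i not
            rw [hvi, hvj, c2]
            rw [Fin.val_last]
            push_cast
            nlinarith
          · rw [hvi, hvj]
            push_cast
            nlinarith
      · rw [Ff_apply, Ff_apply, permN_ne hnN]
        simp only [Equiv.refl_apply]
        linarith
    · rw [Ff_apply, Ff_apply, dist_eq, dist_eq,
        D_fst_ne (by exact hnm : ((⟨n, permN N n i⟩ : Sp)).1 ≠ (⟨m, permN N m j⟩ : Sp).1),
        D_fst_ne (by exact hnm : ((⟨n, i⟩ : Sp)).1 ≠ (⟨m, j⟩ : Sp).1)]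
      linarith

end PlasticEx

theorem exists_strongly_plastic_not_uniformly_plastic :
    ∃ (X : Type) (_ : MetricSpace X), Infinite X ∧
      (∀ f : X → X, (∀ x y : X, dist x y ≤ dist (f x) (f y)) →
        ∀ x y : X, dist (f x) (f y) = dist x y) ∧
      (∃ ε : ℝ, 0 < ε ∧ ∀ δ : ℝ, 0 < δ →
        ∃ f : X → X, Function.Bijective f ∧
          (∃ x y : X, dist (f x) (f y) > dist x y + ε) ∧
          (∀ x y : X, dist (f x) (f y) ≥ dist x y - δ)) := by
  refine ⟨PlasticEx.Sp, PlasticEx.spMetric,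
    Infinite.of_injective (fun n : ℕ => (⟨n, 0⟩ : PlasticEx.Sp))
      (fun a b e => congrArg Sigma.fst e),
    PlasticEx.plastic, PlasticEx.nonuniform⟩
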